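/- Let α, β ∈ ℕⁿ be such that α₁ ≠ 0, gcd(α₁,...,α_n,β₁,...,β_n) = 1, and for each j, α_j ≠ 0 implies β_j = 0 and β_j ≠ 0 implies α_j = 0. Then the polynomial p(t) = t₁^{α₁}···t_n^{α_n} − t₁^{β₁}···t_n^{β_n} is irreducible in ℂ[t₁,...,t_n]. -/

import Mathlib

open MvPolynomial Finset Pointwise

variable {n : ℕ}

def Wt (w : Fin n → ℤ) (d : Fin n →₀ ℕ) : ℤ := ∑ j, w j * d j

lemma Wt_add (w : Fin n → ℤ) (d e : Fin n →₀ ℕ) : Wt w (d + e) = Wt w d + Wt w e := by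
  simp [Wt, Finsupp.add_apply, mul_add, Finset.sum_add_distrib]

lemma Wt_neg (w : Fin n → ℤ) (d : Fin n →₀ ℕ) : Wt (-w) d = -Wt w d := by
  simp [Wt, Finset.sum_neg_distrib]

noncomputable def DD (w : Fin n → ℤ) (d : Fin n →₀ ℕ) : ℤ ×ₗ Lex (Fin n →₀ ℕ) :=
  toLex (Wt w d, toLex d)

lemma DD_add (w : Fin n → ℤ) (d e : Fin n →₀ ℕ) : DD w (d + e) = DD w d + DD w e := by
  simp [DD, Wt_add]; rfl

lemma DD_inj (w : Fin n → ℤ) : Function.Injective (DD w) := by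
  intro d e h
  have h2 := congrArg (fun x => (ofLex x).2) h
  simpa [DD] using h2

lemma fst_le_of_DD_le {w : Fin n → ℤ} {d e : Fin n →₀ ℕ} (h : DD w d ≤ DD w e) :
    Wt w d ≤ Wt w e := by
  rcases Prod.Lex.le_iff.mp h with h | h
  · exact le_of_lt h
  · exact le_of_eq h.1

/-- max weight over the support, `0` for the zero polynomial -/
noncomputable def Mw (w : Fin n → ℤ) (f : MvPolynomial (Fin n) ℂ) : ℤ :=
  if h : f = 0 then 0 else f.support.sup' (support_nonempty.mpr h) (Wt w)

lemma le_Mw {w : Fin n → ℤ} {f : MvPolynomial (Fin n) ℂ} {d : Fin n →₀ ℕ}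
    (hd : d ∈ f.support) : Wt w d ≤ Mw w f := by
  have hf : f ≠ 0 := fun h => by simp [h] at hd
  rw [Mw, dif_neg hf]
  exact Finset.le_sup' _ hd

lemma exists_Mw {f : MvPolynomial (Fin n) ℂ} (hf : f ≠ 0) (w : Fin n → ℤ) :
    ∃ d ∈ f.support, Mw w f = Wt w d := by
  obtain ⟨d, hd, he⟩ := Finset.exists_mem_eq_sup' (support_nonempty.mpr hf) (Wt w)
  exact ⟨d, hd, by rw [Mw, dif_neg hf, he]⟩

/-- Key lemma: additivity of max weight under multiplication. -/
lemma Mw_mul {f g : MvPolynomial (Fin n) ℂ} (hf : f ≠ 0) (hg : g ≠ 0) (w : Fin n → ℤ) :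
    Mw w (f * g) = Mw w f + Mw w g := by
  classical
  rw [Mw, Mw, Mw, dif_neg hf, dif_neg hg, dif_neg (mul_ne_zero hf hg)]
  obtain ⟨d1, h1, e1⟩ := Finset.exists_mem_eq_sup' (support_nonempty.mpr hf) (DD w)
  obtain ⟨d2, h2, e2⟩ := Finset.exists_mem_eq_sup' (support_nonempty.mpr hg) (DD w)
  have hmax1 : ∀ d ∈ f.support, DD w d ≤ DD w d1 := fun d hd => e1 ▸ Finset.le_sup' _ hd
  have hmax2 : ∀ d ∈ g.support, DD w d ≤ DD w d2 := fun d hd => e2 ▸ Finset.le_sup' _ hd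
  have hW1 : f.support.sup' (support_nonempty.mpr hf) (Wt w) = Wt w d1 :=
    le_antisymm (Finset.sup'_le _ _ fun d hd => fst_le_of_DD_le (hmax1 d hd))
      (Finset.le_sup' _ h1)
  have hW2 : g.support.sup' (support_nonempty.mpr hg) (Wt w) = Wt w d2 :=
    le_antisymm (Finset.sup'_le _ _ fun d hd => fst_le_of_DD_le (hmax2 d hd))
      (Finset.le_sup' _ h2)
  have hcoeff : coeff (d1 + d2) (f * g) = coeff d1 f * coeff d2 g := by
    rw [coeff_mul]
    apply Finset.sum_eq_single_of_mem (d1, d2)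
    · simp [Finset.mem_antidiagonal]
    · rintro ⟨x, y⟩ hxy hne
      rw [Finset.HasAntidiagonal.mem_antidiagonal] at hxy
      by_contra hc
      have hx : x ∈ f.support := mem_support_iff.mpr fun h0 => hc (by simp [h0])
      have hy : y ∈ g.support := mem_support_iff.mpr fun h0 => hc (by simp [h0])
      have hxle := hmax1 x hx
      have hyle := hmax2 y hy
      have hsum : DD w x + DD w y = DD w d1 + DD w d2 := by
        rw [← DD_add, ← DD_add, hxy]
      have hx1 : DD w x = DD w d1 := by
        refine le_antisymm hxle ?_
        have := add_le_add_right hyle (DD w x)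
        rw [hsum] at this
        exact le_of_add_le_add_right this
      have hy1 : DD w y = DD w d2 := by
        rw [hx1] at hsum
        exact add_left_cancel hsum
      exact hne (by rw [DD_inj w hx1, DD_inj w hy1])
  have hmem : d1 + d2 ∈ (f * g).support := by
    rw [mem_support_iff, hcoeff]
    exact mul_ne_zero (mem_support_iff.mp h1) (mem_support_iff.mp h2)
  apply le_antisymm
  · apply Finset.sup'_le
    intro d hd
    obtain ⟨x, hx, y, hy, rfl⟩ := Finset.mem_add.mp (MvPolynomial.support_mul f g hd)
    rw [Wt_add, hW1, hW2]
    exact add_le_add (le_trans (Finset.le_sup' _ hx) hW1.le) (le_trans (Finset.le_sup' _ hy) hW2.le)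
  · rw [hW1, hW2, ← Wt_add]
    exact Finset.le_sup' _ hmem

lemma Sp_nonneg {f : MvPolynomial (Fin n) ℂ} (hf : f ≠ 0) (w : Fin n → ℤ) :
    0 ≤ Mw w f + Mw (-w) f := by
  obtain ⟨d, hd, _⟩ := exists_Mw hf w
  have h1 := le_Mw (w := w) hd
  have h2 := le_Mw (w := -w) hd
  rw [Wt_neg] at h2
  linarith

lemma const_of_Sp_zero {f : MvPolynomial (Fin n) ℂ} (w : Fin n → ℤ)
    (h : Mw w f + Mw (-w) f = 0) {d : Fin n →₀ ℕ} (hd : d ∈ f.support) :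
    Wt w d = Mw w f := by
  have h1 := le_Mw (w := w) hd
  have h2 := le_Mw (w := -w) hd
  rw [Wt_neg] at h2
  linarith

lemma Mw_monomial {w : Fin n → ℤ} {d : Fin n →₀ ℕ} {c : ℂ} (hc : c ≠ 0) :
    Mw w (monomial d c) = Wt w d := by
  have h0 : (monomial d c : MvPolynomial (Fin n) ℂ) ≠ 0 := by
    simp [monomial_eq_zero, hc]
  rw [Mw, dif_neg h0]
  have hs : (monomial d c : MvPolynomial (Fin n) ℂ).support = {d} := by
    classical
    rw [support_monomial, if_neg hc]
  rw [Finset.sup'_congr _ hs (fun _ _ => rfl), Finset.sup'_singleton]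

lemma Wt_zero (w : Fin n → ℤ) : Wt w 0 = 0 := by simp [Wt]

lemma Mw_one (w : Fin n → ℤ) : Mw w (1 : MvPolynomial (Fin n) ℂ) = 0 := by
  have h1 : (1 : MvPolynomial (Fin n) ℂ) = monomial 0 1 := by
    rw [monomial_zero', C_1]
  rw [h1, Mw_monomial one_ne_zero, Wt_zero]

/-- Irreducibility of `t^α − t^β` for disjointly supported exponent vectors with
coprime combined entries and `α₁ ≠ 0`. -/
theorem stmt14 (n : ℕ) (hn : 0 < n) (α β : Fin n → ℕ)
    (hα1 : α ⟨0, hn⟩ ≠ 0)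
    (hgcd : Nat.gcd (Finset.univ.gcd α) (Finset.univ.gcd β) = 1)
    (hdisj : ∀ j, (α j ≠ 0 → β j = 0) ∧ (β j ≠ 0 → α j = 0)) :
    Irreducible
      ((∏ j, (X j : MvPolynomial (Fin n) ℂ) ^ α j) - ∏ j, (X j : MvPolynomial (Fin n) ℂ) ^ β j) := by
  classical
  have hprod : ∀ γ : Fin n → ℕ, (∏ j, (X j : MvPolynomial (Fin n) ℂ) ^ γ j)
      = monomial (Finsupp.equivFunOnFinite.symm γ) 1 := by
    intro γ
    rw [monomial_eq, C_1, one_mul, Finsupp.prod_fintype _ _ (fun i => pow_zero _)]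
    exact Finset.prod_congr rfl (fun j _ => by
      rfl)
  rw [hprod α, hprod β]
  set j0 : Fin n := ⟨0, hn⟩ with hj0
  have hβ0 : β j0 = 0 := (hdisj j0).1 hα1
  set a : Fin n →₀ ℕ := Finsupp.equivFunOnFinite.symm α with ha_def
  set b : Fin n →₀ ℕ := Finsupp.equivFunOnFinite.symm β with hb_def
  have haj : ∀ j, a j = α j := fun j => rfl
  have hbj : ∀ j, b j = β j := fun j => rfl
  have hab : a ≠ b := fun h => hα1 (by rw [← haj j0, h, hbj j0, hβ0])
  set p : MvPolynomial (Fin n) ℂ := monomial a 1 - monomial b 1 with hp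
  have hsupp : p.support = {a, b} := by
    ext d
    simp only [hp, mem_support_iff, coeff_sub, coeff_monomial, Finset.mem_insert,
      Finset.mem_singleton]
    by_cases h1 : d = a <;> by_cases h2 : d = b
    · exact absurd (h1.symm.trans h2) hab
    · simp [h1, h2, hab, Ne.symm hab]
    · simp [h1, h2, hab, Ne.symm hab]
    · rw [if_neg (fun h : a = d => h1 h.symm), if_neg (fun h : b = d => h2 h.symm)]
      simpa using ⟨h1, h2⟩
  have hamem : a ∈ p.support := by rw [hsupp]; exact Finset.mem_insert_self a {b}
  have hbmem : b ∈ p.support := by rw [hsupp]; simp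
  have hp0 : p ≠ 0 := fun h => by simp [h] at hamem
  set δ : Fin n → ℤ := fun j => (α j : ℤ) - (β j : ℤ) with hδ
  set N : ℤ := ∑ j, δ j * δ j with hN
  have hMw_pair : ∀ w : Fin n → ℤ, Mw w p = Wt w a ⊔ Wt w b := by
    intro w
    rw [Mw, dif_neg hp0]
    refine le_antisymm (Finset.sup'_le _ _ fun d hd => ?_)
      (sup_le (Finset.le_sup' _ hamem) (Finset.le_sup' _ hbmem))
    rw [hsupp, Finset.mem_insert, Finset.mem_singleton] at hd
    rcases hd with rfl | rfl
    · exact le_sup_left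
    · exact le_sup_right
  have hWab : ∀ w : Fin n → ℤ, Wt w a - Wt w b = ∑ j, w j * δ j := by
    intro w
    rw [Wt, Wt, ← Finset.sum_sub_distrib]
    exact Finset.sum_congr rfl fun j _ => by rw [haj, hbj, hδ]; ring
  have hNδ : Wt δ a - Wt δ b = N := by rw [hWab δ, hN]
  have hNpos : 0 < N := by
    have hterm : (0:ℤ) < δ j0 * δ j0 := by
      have : δ j0 ≠ 0 := by
        rw [hδ]
        simp only [hβ0, Nat.cast_zero, sub_zero]
        exact_mod_cast hα1
      exact mul_self_pos.mpr this
    calc (0:ℤ) < δ j0 * δ j0 := hterm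
      _ ≤ N := by
          rw [hN]
          exact Finset.single_le_sum (fun i _ => mul_self_nonneg (δ i)) (Finset.mem_univ j0)
  have hSp_p : Mw δ p + Mw (-δ) p = N := by
    rw [hMw_pair δ, hMw_pair (-δ), Wt_neg, Wt_neg]
    have hlt : Wt δ b < Wt δ a := by linarith
    rw [sup_eq_left.mpr hlt.le, sup_eq_right.mpr (neg_le_neg hlt.le)]
    linarith
  have hSp_p_zero : ∀ w : Fin n → ℤ, (∑ j, w j * δ j = 0) → Mw w p + Mw (-w) p = 0 := by
    intro w hw
    have heq : Wt w a = Wt w b := by have := hWab w; rw [hw] at this; linarith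
    rw [hMw_pair w, hMw_pair (-w), Wt_neg, Wt_neg, heq]
    simp
  -- gcd of |δ| is 1
  have hgcd1 : Finset.univ.gcd (fun j => (δ j).natAbs) = 1 := by
    have hdα : Finset.univ.gcd (fun j => (δ j).natAbs) ∣ Finset.univ.gcd α := by
      apply Finset.dvd_gcd
      intro j _
      by_cases hβj : β j = 0
      · have he : (δ j).natAbs = α j := by rw [hδ]; simp [hβj]
        exact he ▸ Finset.gcd_dvd (Finset.mem_univ j)
      · rw [(hdisj j).2 hβj]
        exact dvd_zero _
    have hdβ : Finset.univ.gcd (fun j => (δ j).natAbs) ∣ Finset.univ.gcd β := by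
      apply Finset.dvd_gcd
      intro j _
      by_cases hαj : α j = 0
      · have he : (δ j).natAbs = β j := by rw [hδ]; simp [hαj]
        exact he ▸ Finset.gcd_dvd (Finset.mem_univ j)
      · rw [(hdisj j).1 hαj]
        exact dvd_zero _
    exact Nat.dvd_one.mp (hgcd ▸ Nat.dvd_gcd hdα hdβ)
  -- the line claim
  have claimB : ∀ f g : MvPolynomial (Fin n) ℂ, f ≠ 0 → g ≠ 0 → p = f * g →
      ∀ d ∈ f.support, ∀ d' ∈ f.support,
        (N ∣ Wt δ d - Wt δ d') ∧ (Wt δ d = Wt δ d' → d = d') := by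
    intro f g hf0 hg0 hfg d hd d' hd'
    have stepA : ∀ w : Fin n → ℤ, (∑ j, w j * δ j = 0) → Wt w d = Wt w d' := by
      intro w hw
      have hz : Mw w (f * g) + Mw (-w) (f * g) = 0 := by
        rw [← hfg]; exact hSp_p_zero w hw
      rw [Mw_mul hf0 hg0, Mw_mul hf0 hg0] at hz
      have hfn := Sp_nonneg hf0 w
      have hgn := Sp_nonneg hg0 w
      have hfz : Mw w f + Mw (-w) f = 0 := by linarith
      rw [const_of_Sp_zero w hfz hd, const_of_Sp_zero w hfz hd']
    set x : Fin n → ℤ := fun j => (d j : ℤ) - d' j with hx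
    set m : ℤ := ∑ j, δ j * x j with hm
    have hWd : Wt δ d - Wt δ d' = m := by
      rw [hm, Wt, Wt, ← Finset.sum_sub_distrib]
      exact Finset.sum_congr rfl fun j _ => by rw [hx]; ring
    set w : Fin n → ℤ := fun j => N * x j - m * δ j with hw
    have hwδ : ∑ j, w j * δ j = 0 := by
      have e1 : ∑ j, w j * δ j = N * (∑ j, δ j * x j) - m * (∑ j, δ j * δ j) := by
        rw [Finset.mul_sum, Finset.mul_sum, ← Finset.sum_sub_distrib]
        exact Finset.sum_congr rfl fun j _ => by rw [hw]; ring
      rw [e1, ← hm, ← hN]; ring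
    have hwx : ∑ j, w j * x j = 0 := by
      have hA := stepA w hwδ
      have e1 : ∑ j, w j * x j = Wt w d - Wt w d' := by
        rw [Wt, Wt, ← Finset.sum_sub_distrib]
        exact Finset.sum_congr rfl fun j _ => by rw [hx]; ring
      rw [e1, hA]; ring
    have hkey : ∀ j, N * x j = m * δ j := by
      have hsq : ∑ j, w j * w j = 0 := by
        have e1 : ∑ j, w j * w j = N * (∑ j, w j * x j) - m * (∑ j, w j * δ j) := by
          rw [Finset.mul_sum, Finset.mul_sum, ← Finset.sum_sub_distrib]
          exact Finset.sum_congr rfl fun j _ => by rw [hw]; ring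
        rw [e1, hwx, hwδ]; ring
      intro j
      have hz : w j = 0 := mul_self_eq_zero.mp
        ((Finset.sum_eq_zero_iff_of_nonneg (fun i _ => mul_self_nonneg (w i))).mp hsq j
          (Finset.mem_univ j))
      have : N * x j - m * δ j = 0 := by rw [← hz, hw]
      linarith
    have hdvd : N ∣ m := by
      have hNd : ∀ j, N.natAbs ∣ m.natAbs * (δ j).natAbs := by
        intro j
        have hd1 : N ∣ m * δ j := ⟨x j, (hkey j).symm⟩
        have := Int.natAbs_dvd_natAbs.mpr hd1
        rwa [Int.natAbs_mul] at this
      have h2 : N.natAbs ∣ Finset.univ.gcd (fun j => m.natAbs * (δ j).natAbs) :=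
        Finset.dvd_gcd fun j _ => hNd j
      rw [Finset.gcd_mul_left, hgcd1] at h2
      simp only [normalize_eq, mul_one] at h2
      exact Int.natAbs_dvd_natAbs.mp h2
    refine ⟨hWd ▸ hdvd, fun he => ?_⟩
    have hm0 : m = 0 := by rw [← hWd, he]; ring
    have hx0 : ∀ j, x j = 0 := by
      intro j
      have := hkey j
      rw [hm0, zero_mul] at this
      exact (mul_eq_zero.mp this).resolve_left hNpos.ne'
    apply Finsupp.ext
    intro j
    have hj : (d j : ℤ) - d' j = 0 := hx0 j
    omega
  -- unit claim
  have claimU : ∀ f g : MvPolynomial (Fin n) ℂ, f ≠ 0 → g ≠ 0 → p = f * g →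
      Mw δ f + Mw (-δ) f = 0 → IsUnit f := by
    intro f g hf0 hg0 hfg hsp
    obtain ⟨d0, hd0, _⟩ := exists_Mw hf0 δ
    have hsingle : ∀ d ∈ f.support, d = d0 := by
      intro d hd
      exact (claimB f g hf0 hg0 hfg d hd d0 hd0).2
        ((const_of_Sp_zero δ hsp hd).trans (const_of_Sp_zero δ hsp hd0).symm)
    have hsupf : f.support = {d0} := Finset.eq_singleton_iff_unique_mem.mpr ⟨hd0, hsingle⟩
    have hd0zero : d0 = 0 := by
      by_contra hne
      obtain ⟨j, hj⟩ : ∃ j, d0 j ≠ 0 := by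
        by_contra hall
        push_neg at hall
        exact hne (Finsupp.ext fun j => hall j)
      have hsub : p.support ⊆ ({d0} : Finset (Fin n →₀ ℕ)) + g.support := by
        rw [hfg]
        exact (MvPolynomial.support_mul f g).trans (by rw [hsupf])
      obtain ⟨u, hu, y, hy, hay⟩ := Finset.mem_add.mp (hsub hamem)
      obtain ⟨u', hu', y', hy', hby⟩ := Finset.mem_add.mp (hsub hbmem)
      rw [Finset.mem_singleton] at hu hu'
      have hαj : α j ≠ 0 := by
        have h : a j = d0 j + y j := by rw [← hay, hu]; rfl
        rw [haj] at h
        omega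
      have hβj : β j ≠ 0 := by
        have h : b j = d0 j + y' j := by rw [← hby, hu']; rfl
        rw [hbj] at h
        omega
      exact hβj ((hdisj j).1 hαj)
    have hfC : f = C (coeff 0 f) := by
      conv_lhs => rw [as_sum f]
      rw [hsupf, hd0zero, Finset.sum_singleton, monomial_zero']
    rw [hfC]
    have hc0 : coeff 0 f ≠ 0 := by
      rw [← hd0zero]
      exact mem_support_iff.mp hd0
    exact (isUnit_iff_ne_zero.mpr hc0).map C
  constructor
  · intro hu
    obtain ⟨q, hq⟩ := isUnit_iff_exists_inv.mp hu
    have hq0 : q ≠ 0 := fun h => by simp [h] at hq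
    have h1 : Mw δ (p * q) + Mw (-δ) (p * q) = 0 := by
      rw [hq, Mw_one, Mw_one]; ring
    rw [Mw_mul hp0 hq0, Mw_mul hp0 hq0] at h1
    have := Sp_nonneg hq0 δ
    linarith
  · intro f g hfg
    have hf0 : f ≠ 0 := fun h => hp0 (by rw [hfg, h, zero_mul])
    have hg0 : g ≠ 0 := fun h => hp0 (by rw [hfg, h, mul_zero])
    have hfg' : p = g * f := by rw [hfg, mul_comm]
    obtain ⟨dM, hdM, heM⟩ := exists_Mw hf0 δ
    obtain ⟨dm, hdm, hem⟩ := exists_Mw hf0 (-δ)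
    have hSpf : Mw δ f + Mw (-δ) f = Wt δ dM - Wt δ dm := by
      rw [heM, hem, Wt_neg]; ring
    have hdvdf : N ∣ Mw δ f + Mw (-δ) f :=
      hSpf ▸ (claimB f g hf0 hg0 hfg dM hdM dm hdm).1
    obtain ⟨dM', hdM', heM'⟩ := exists_Mw hg0 δ
    obtain ⟨dm', hdm', hem'⟩ := exists_Mw hg0 (-δ)
    have hSpg : Mw δ g + Mw (-δ) g = Wt δ dM' - Wt δ dm' := by
      rw [heM', hem', Wt_neg]; ring
    have hdvdg : N ∣ Mw δ g + Mw (-δ) g :=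
      hSpg ▸ (claimB g f hg0 hf0 hfg' dM' hdM' dm' hdm').1
    have hsum : (Mw δ f + Mw (-δ) f) + (Mw δ g + Mw (-δ) g) = N := by
      have h2 := hSp_p
      rw [hfg, Mw_mul hf0 hg0, Mw_mul hf0 hg0] at h2
      linarith
    obtain ⟨k1, e1⟩ := hdvdf
    obtain ⟨k2, e2⟩ := hdvdg
    have hk1 : 0 ≤ k1 := nonneg_of_mul_nonneg_right (e1 ▸ Sp_nonneg hf0 δ) hNpos
    have hk2 : 0 ≤ k2 := nonneg_of_mul_nonneg_right (e2 ▸ Sp_nonneg hg0 δ) hNpos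
    have hk12 : k1 + k2 = 1 := by
      have : N * (k1 + k2) = N * 1 := by rw [mul_add, mul_one, ← e1, ← e2]; linarith
      exact mul_left_cancel₀ hNpos.ne' this
    have hcase : k1 = 0 ∨ k2 = 0 := by omega
    rcases hcase with h | h
    · exact Or.inl (claimU f g hf0 hg0 hfg (by rw [e1, h, mul_zero]))
    · exact Or.inr (claimU g f hg0 hf0 hfg' (by rw [e2, h, mul_zero]))
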